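/- Define R : ℝ² → ℝ by R(y,z) = ∫₀^z 3(s−z)(s+y)(1+(y+s)²)^{−5/2} ds and Q(y,z) = ∫₀^z R(y,r) dr. Then there exists a constant C > 0 such that for all y, z ∈ ℝ: |Q(y,z)| ≤ C|z|³, |R(y,z)| ≤ Cz², |∂_z R(y,z)| ≤ C|z|, and |∂_y R(y,z)| ≤ Cz², where ∂_z R(y,z) denotes the derivative of the function z ↦ R(y,z) at z and ∂_y R(y,z) denotes the derivative of the function y ↦ R(y,z) at y. -/

import Mathlib

open MeasureTheory intervalIntegral

/-- The Taylor remainder function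
`R(y,z) = ∫₀^z 3(s-z)(s+y)(1+(y+s)²)^{-5/2} ds`. -/
noncomputable def Rfun (y z : ℝ) : ℝ :=
  ∫ s in (0 : ℝ)..z, 3 * (s - z) * (s + y) * (1 + (y + s) ^ 2) ^ (-(5 : ℝ) / 2)

/-- `Q(y,z) = ∫₀^z R(y,r) dr`. -/
noncomputable def Qfun (y z : ℝ) : ℝ :=
  ∫ t in (0 : ℝ)..z, Rfun y t

noncomputable def Gf (t : ℝ) : ℝ := t * (1 + t ^ 2) ^ (-(5 : ℝ) / 2)

lemma pos_base (t : ℝ) : (0:ℝ) < 1 + t ^ 2 := by positivity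

lemma one_le_base (t : ℝ) : (1:ℝ) ≤ 1 + t ^ 2 := by nlinarith [sq_nonneg t]

lemma rpow_base_le_one (t : ℝ) (p : ℝ) (hp : p ≤ 0) : (1 + t ^ 2) ^ p ≤ 1 :=
  Real.rpow_le_one_of_one_le_of_nonpos (one_le_base t) hp

lemma Gf_cont : Continuous Gf := by
  apply continuous_id.mul
  exact (continuous_const.add (continuous_pow 2)).rpow_const
    (fun t => Or.inl (pos_base t).ne')

lemma Gf_bound (t : ℝ) : |Gf t| ≤ 1 := by
  have h1 : |Gf t| = |t| * (1 + t ^ 2) ^ (-(5 : ℝ) / 2) := by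
    rw [Gf, abs_mul, abs_of_pos (Real.rpow_pos_of_pos (pos_base t) _)]
  have h2 : |t| ≤ 1 + t ^ 2 := by
    nlinarith [sq_nonneg (|t| - 1), sq_abs t]
  have h3 : (1 + t ^ 2) * (1 + t ^ 2) ^ (-(5 : ℝ) / 2) ≤ 1 := by
    have : (1 + t ^ 2) * (1 + t ^ 2) ^ (-(5 : ℝ) / 2)
        = (1 + t ^ 2) ^ (1 + -(5 : ℝ) / 2) := by
      rw [Real.rpow_add (pos_base t), Real.rpow_one]
    rw [this]
    exact rpow_base_le_one t _ (by norm_num)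
  calc |Gf t| = |t| * (1 + t ^ 2) ^ (-(5 : ℝ) / 2) := h1
    _ ≤ (1 + t ^ 2) * (1 + t ^ 2) ^ (-(5 : ℝ) / 2) := by
        exact mul_le_mul_of_nonneg_right h2 (Real.rpow_pos_of_pos (pos_base t) _).le
    _ ≤ 1 := h3

noncomputable def Gf' (t : ℝ) : ℝ :=
  (1 + t ^ 2) ^ (-(5 : ℝ) / 2) + t * (2 * t * (-(5 : ℝ) / 2) * (1 + t ^ 2) ^ (-(5 : ℝ) / 2 - 1))

lemma Gf_hasDeriv (t : ℝ) : HasDerivAt Gf (Gf' t) t := by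
  have hb : HasDerivAt (fun t : ℝ => 1 + t ^ 2) (2 * t) t := by
    simpa using ((hasDerivAt_pow 2 t).const_add 1)
  have hr := hb.rpow_const (p := -(5 : ℝ) / 2) (Or.inl (pos_base t).ne')
  have h := (hasDerivAt_id' t).mul hr
  rw [one_mul] at h
  exact h

lemma Gf'_bound (t : ℝ) : |Gf' t| ≤ 6 := by
  have h1 : |(1 + t ^ 2) ^ (-(5 : ℝ) / 2)| ≤ 1 := by
    rw [abs_of_pos (Real.rpow_pos_of_pos (pos_base t) _)]
    exact rpow_base_le_one t _ (by norm_num)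
  have h2 : |t * (2 * t * (-(5 : ℝ) / 2) * (1 + t ^ 2) ^ (-(5 : ℝ) / 2 - 1))| ≤ 5 := by
    have he : t * (2 * t * (-(5 : ℝ) / 2) * (1 + t ^ 2) ^ (-(5 : ℝ) / 2 - 1))
        = -(5 * (t ^ 2 * (1 + t ^ 2) ^ (-(5 : ℝ) / 2 - 1))) := by ring
    rw [he, abs_neg, abs_mul, abs_mul]
    have hpos := Real.rpow_pos_of_pos (pos_base t) (-(5 : ℝ) / 2 - 1)
    rw [abs_of_pos hpos, abs_of_nonneg (sq_nonneg t)]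
    have ht2 : t ^ 2 ≤ 1 + t ^ 2 := by linarith
    have : t ^ 2 * (1 + t ^ 2) ^ (-(5 : ℝ) / 2 - 1)
        ≤ (1 + t ^ 2) * (1 + t ^ 2) ^ (-(5 : ℝ) / 2 - 1) :=
      mul_le_mul_of_nonneg_right ht2 hpos.le
    have h3 : (1 + t ^ 2) * (1 + t ^ 2) ^ (-(5 : ℝ) / 2 - 1)
        = (1 + t ^ 2) ^ (1 + (-(5 : ℝ) / 2 - 1)) := by
      rw [Real.rpow_add (pos_base t), Real.rpow_one]
    have h4 : (1 + t ^ 2) ^ (1 + (-(5 : ℝ) / 2 - 1)) ≤ 1 :=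
      rpow_base_le_one t _ (by norm_num)
    rw [abs_of_nonneg] <;> nlinarith [Real.rpow_pos_of_pos (pos_base t) (-(5 : ℝ) / 2 - 1),
      sq_nonneg t]
  calc |Gf' t| ≤ |(1 + t ^ 2) ^ (-(5 : ℝ) / 2)|
      + |t * (2 * t * (-(5 : ℝ) / 2) * (1 + t ^ 2) ^ (-(5 : ℝ) / 2 - 1))| := abs_add_le _ _
    _ ≤ 6 := by linarith

lemma Gf_lip (a b : ℝ) : |Gf a - Gf b| ≤ 6 * |a - b| := by
  have := Convex.norm_image_sub_le_of_norm_hasDerivWithin_le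
    (f := Gf) (f' := Gf') (s := Set.univ) (C := 6)
    (fun x _ => (Gf_hasDeriv x).hasDerivWithinAt)
    (fun x _ => by simpa [Real.norm_eq_abs] using Gf'_bound x)
    convex_univ (Set.mem_univ b) (Set.mem_univ a)
  simpa [Real.norm_eq_abs] using this

noncomputable def Phi (x : ℝ) : ℝ := ∫ u in (0 : ℝ)..x, Gf u
noncomputable def Psi (x : ℝ) : ℝ := ∫ u in (0 : ℝ)..x, u * Gf u

lemma Phi_hasDeriv (x : ℝ) : HasDerivAt Phi (Gf x) x :=
  integral_hasDerivAt_right (Gf_cont.intervalIntegrable _ _)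
    (Gf_cont.stronglyMeasurableAtFilter _ _) Gf_cont.continuousAt

lemma Psi_hasDeriv (x : ℝ) : HasDerivAt Psi (x * Gf x) x :=
  integral_hasDerivAt_right ((continuous_id.mul Gf_cont).intervalIntegrable _ _)
    ((continuous_id.mul Gf_cont).stronglyMeasurableAtFilter _ _)
    (continuous_id.mul Gf_cont).continuousAt

lemma Phi_sub (a b : ℝ) : Phi b - Phi a = ∫ u in a..b, Gf u :=
  integral_interval_sub_left (Gf_cont.intervalIntegrable _ _) (Gf_cont.intervalIntegrable _ _)

lemma Phi_sub_bound (a b : ℝ) : |Phi b - Phi a| ≤ |b - a| := by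
  rw [Phi_sub]
  have := intervalIntegral.norm_integral_le_of_norm_le_const (a := a) (b := b) (C := 1)
    (f := Gf) (fun u _ => by simpa [Real.norm_eq_abs] using Gf_bound u)
  simpa [Real.norm_eq_abs] using this

lemma Rfun_eq (y z : ℝ) :
    Rfun y z = 3 * (Psi (y + z) - Psi y) - 3 * (y + z) * (Phi (y + z) - Phi y) := by
  have h1 : Rfun y z = ∫ s in (0:ℝ)..z,
      (fun u => 3 * u * Gf u - 3 * (y + z) * Gf u) (s + y) := by
    rw [Rfun]
    apply intervalIntegral.integral_congr
    intro s _
    simp only [Gf]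
    have : y + s = s + y := by ring
    rw [this]
    ring
  rw [h1, intervalIntegral.integral_comp_add_right
      (fun u => 3 * u * Gf u - 3 * (y + z) * Gf u) y]
  have h2 : (∫ u in (0 + y)..(z + y), (3 * u * Gf u - 3 * (y + z) * Gf u))
      = (∫ u in y..(z + y), 3 * (u * Gf u)) - ∫ u in y..(z + y), 3 * (y + z) * Gf u := by
    rw [zero_add]
    rw [← intervalIntegral.integral_sub]
    · apply intervalIntegral.integral_congr; intro u _; ring
    · exact (continuous_const.mul (continuous_id.mul Gf_cont)).intervalIntegrable _ _
    · exact (continuous_const.mul Gf_cont).intervalIntegrable _ _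
  rw [h2, intervalIntegral.integral_const_mul, intervalIntegral.integral_const_mul]
  have hc : Continuous fun u : ℝ => u * Gf u := continuous_id.mul Gf_cont
  have h3 : (∫ u in y..(z + y), u * Gf u) = Psi (y + z) - Psi y := by
    rw [show z + y = y + z by ring]
    exact (integral_interval_sub_left (hc.intervalIntegrable _ _)
      (hc.intervalIntegrable _ _)).symm
  have h4 : (∫ u in y..(z + y), Gf u) = Phi (y + z) - Phi y := by
    rw [show z + y = y + z by ring]
    exact (Phi_sub y (y + z)).symm
  rw [h3, h4]

lemma Rfun_hasDeriv_z (y z : ℝ) :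
    HasDerivAt (fun w => Rfun y w) (-(3 * (Phi (y + z) - Phi y))) z := by
  have h : (fun w => Rfun y w)
      = fun w => 3 * (Psi (y + w) - Psi y) - 3 * (y + w) * (Phi (y + w) - Phi y) := by
    funext w; exact Rfun_eq y w
  rw [h]
  have hyz : HasDerivAt (fun w : ℝ => y + w) 1 z := by
    simpa using (hasDerivAt_id z).const_add y
  have hPsi : HasDerivAt (fun w => Psi (y + w)) ((y + z) * Gf (y + z)) z := by
    have h := (Psi_hasDeriv (y + z)).comp z hyz
    rw [mul_one] at h
    exact h
  have hPhi : HasDerivAt (fun w => Phi (y + w)) (Gf (y + z)) z := by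
    have h := (Phi_hasDeriv (y + z)).comp z hyz
    rw [mul_one] at h
    exact h
  have := ((hPsi.sub_const (Psi y)).const_mul 3).sub
    ((hyz.const_mul 3).mul (hPhi.sub_const (Phi y)))
  refine this.congr_deriv ?_
  ring

lemma Rfun_hasDeriv_y (y z : ℝ) :
    HasDerivAt (fun w => Rfun w z) (3 * z * Gf y - 3 * (Phi (y + z) - Phi y)) y := by
  have h : (fun w => Rfun w z)
      = fun w => 3 * (Psi (w + z) - Psi w) - 3 * (w + z) * (Phi (w + z) - Phi w) := by
    funext w; exact Rfun_eq w z
  rw [h]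
  have hyz : HasDerivAt (fun w : ℝ => w + z) 1 y := by
    simpa using (hasDerivAt_id y).add_const z
  have hPsi : HasDerivAt (fun w => Psi (w + z)) ((y + z) * Gf (y + z)) y := by
    have h := (Psi_hasDeriv (y + z)).comp y hyz
    rw [mul_one] at h
    exact h
  have hPhi : HasDerivAt (fun w => Phi (w + z)) (Gf (y + z)) y := by
    have h := (Phi_hasDeriv (y + z)).comp y hyz
    rw [mul_one] at h
    exact h
  have := ((hPsi.sub (Psi_hasDeriv y)).const_mul 3).sub
    ((hyz.const_mul 3).mul (hPhi.sub (Phi_hasDeriv y)))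
  refine this.congr_deriv ?_
  simp only [Pi.sub_apply]
  ring

lemma mem_uIoc_abs {z t : ℝ} (h : t ∈ Set.uIoc 0 z) : |t| ≤ |z| := by
  rcases Set.mem_uIoc.mp h with ⟨h1, h2⟩ | ⟨h1, h2⟩ <;>
    cases abs_cases z <;> cases abs_cases t <;> linarith

lemma abs_sub_le_uIoc {z s : ℝ} (hs : s ∈ Set.uIoc 0 z) : |s - z| ≤ |z| := by
  rcases Set.mem_uIoc.mp hs with ⟨h1, h2⟩ | ⟨h1, h2⟩ <;>
    cases abs_cases z <;> cases abs_cases (s - z) <;> linarith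

lemma uIoc_dist {a z u : ℝ} (h : u ∈ Set.uIoc a (a + z)) : |u - a| ≤ |z| := by
  rcases Set.mem_uIoc.mp h with ⟨h1, h2⟩ | ⟨h1, h2⟩ <;>
    cases abs_cases z <;> cases abs_cases (u - a) <;> linarith

lemma Rfun_bound (y z : ℝ) : |Rfun y z| ≤ 3 * z ^ 2 := by
  have h := intervalIntegral.norm_integral_le_of_norm_le_const (C := 3 * |z|)
    (f := fun s => 3 * (s - z) * (s + y) * (1 + (y + s) ^ 2) ^ (-(5 : ℝ) / 2))
    (a := (0 : ℝ)) (b := z) ?_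
  · rw [Real.norm_eq_abs] at h
    have : 3 * |z| * |z - 0| = 3 * z ^ 2 := by
      rw [sub_zero, ← sq_abs z]; ring
    rw [this] at h
    exact h
  · intro s hs
    beta_reduce
    have he : 3 * (s - z) * (s + y) * (1 + (y + s) ^ 2) ^ (-(5 : ℝ) / 2)
        = 3 * (s - z) * Gf (s + y) := by
      rw [Gf, show y + s = s + y from add_comm y s]; ring
    rw [Real.norm_eq_abs, he, abs_mul, abs_mul, abs_of_nonneg (by norm_num : (0:ℝ) ≤ 3)]
    have h1 := abs_sub_le_uIoc hs
    have h2 := Gf_bound (s + y)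
    have h3 := abs_nonneg (s - z)
    nlinarith [abs_nonneg (Gf (s + y)), abs_nonneg z]

lemma Qfun_bound (y z : ℝ) : |Qfun y z| ≤ 3 * |z| ^ 3 := by
  have h := intervalIntegral.norm_integral_le_of_norm_le_const (C := 3 * z ^ 2)
    (f := fun t => Rfun y t) (a := (0 : ℝ)) (b := z) ?_
  · rw [Real.norm_eq_abs, sub_zero] at h
    calc |Qfun y z| ≤ 3 * z ^ 2 * |z| := h
      _ = 3 * |z| ^ 3 := by
        rw [show |z| ^ 3 = |z| ^ 2 * |z| by ring, sq_abs]; ring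
  · intro t ht
    rw [Real.norm_eq_abs]
    calc |Rfun y t| ≤ 3 * t ^ 2 := Rfun_bound y t
      _ ≤ 3 * z ^ 2 := by
        have := mem_uIoc_abs ht
        nlinarith [abs_nonneg t, sq_abs t, sq_abs z]

/-- Uniform bounds `|Q(y,z)| ≤ C|z|³`, `|R(y,z)| ≤ Cz²`,
`|∂_z R(y,z)| ≤ C|z|`, `|∂_y R(y,z)| ≤ Cz²`. -/
theorem stmt13 : ∃ C : ℝ, 0 < C ∧ ∀ y z : ℝ,
    |Qfun y z| ≤ C * |z| ^ 3 ∧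
    |Rfun y z| ≤ C * z ^ 2 ∧
    |deriv (fun w => Rfun y w) z| ≤ C * |z| ∧
    |deriv (fun w => Rfun w z) y| ≤ C * z ^ 2 := by
  refine ⟨18, by norm_num, fun y z => ⟨?_, ?_, ?_, ?_⟩⟩
  · have := Qfun_bound y z
    have h3 : (0:ℝ) ≤ |z| ^ 3 := by positivity
    nlinarith
  · have := Rfun_bound y z
    nlinarith [sq_nonneg z]
  · rw [(Rfun_hasDeriv_z y z).deriv, abs_neg, abs_mul,
      abs_of_nonneg (by norm_num : (0:ℝ) ≤ 3)]
    have h := Phi_sub_bound y (y + z)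
    rw [add_sub_cancel_left] at h
    nlinarith [abs_nonneg z]
  · rw [(Rfun_hasDeriv_y y z).deriv]
    have he : 3 * z * Gf y - 3 * (Phi (y + z) - Phi y)
        = -(3 * ∫ u in y..(y + z), (Gf u - Gf y)) := by
      rw [Phi_sub, intervalIntegral.integral_sub (Gf_cont.intervalIntegrable _ _)
        intervalIntegrable_const, intervalIntegral.integral_const]
      rw [add_sub_cancel_left, smul_eq_mul]
      ring
    rw [he, abs_neg, abs_mul, abs_of_nonneg (by norm_num : (0:ℝ) ≤ 3)]
    have hI := intervalIntegral.norm_integral_le_of_norm_le_const (C := 6 * |z|)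
      (f := fun u => Gf u - Gf y) (a := y) (b := y + z) ?_
    · rw [Real.norm_eq_abs, add_sub_cancel_left] at hI
      nlinarith [abs_nonneg z, sq_abs z, abs_nonneg (∫ u in y..(y + z), (Gf u - Gf y))]
    · intro u hu
      rw [Real.norm_eq_abs]
      calc |Gf u - Gf y| ≤ 6 * |u - y| := Gf_lip u y
        _ ≤ 6 * |z| := by have := uIoc_dist hu; linarith
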